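/- For the reduction that creates, from a directed graph G = (V,E) with unique source s and sink t, a signed edge-matching instance with one vertex tile per vertex, one edge tile per edge, and one bridge tile (n = |V| + |E| + 1 tiles): if G has a Hamiltonian path from s to t, then all n tiles can be placed in a 1 × n row with all adjacent edges compatible. -/

import Mathlib

/-- Colors used by the reduction: entering/leaving colors `I v`, `O v` per vertex,
an unmatchable color `U v` per vertex, a global garbage color `X`, and the bridge's
unmatchable color `UB`. -/
inductive Col (V : Type) where
  | I : V → Col V
  | O : V → Col V
  | U : V → Col V
  | X : Col V
  | UB : Col V

/-- A signed square tile: each side carries a color and a sign (`true` = `+`). -/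
structure STile (V : Type) where
  left : Col V × Bool
  top : Col V × Bool
  right : Col V × Bool
  bottom : Col V × Bool

/-- Rotation of a tile by 90 degrees. -/
def rotCW {V : Type} (T : STile V) : STile V :=
  ⟨T.bottom, T.left, T.top, T.right⟩

/-- Vertex tile `T(+I_v, +U_v, +O_v, +U_v)`. -/
def vertexTile {V : Type} (v : V) : STile V :=
  ⟨(.I v, true), (.U v, true), (.O v, true), (.U v, true)⟩

/-- Edge tile `T(-O_u, +X, -I_v, -X)` for an edge `(u, v)`. -/
def edgeTile {V : Type} (u v : V) : STile V :=
  ⟨(.O u, false), (.X, true), (.I v, false), (.X, false)⟩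

/-- Bridge tile `T(-O_t, +U_B, -X, +U_B)`. -/
def bridgeTile {V : Type} (t : V) : STile V :=
  ⟨(.O t, false), (.UB, true), (.X, false), (.UB, true)⟩

/-- Two horizontally adjacent tiles are compatible if the shared edge has the same
color and opposite signs. -/
def compatible {V : Type} (a b : STile V) : Prop :=
  a.right.1 = b.left.1 ∧ a.right.2 = !b.left.2

/-- The tile (in canonical orientation) associated to each tile identifier:
one vertex tile per vertex, one edge tile per edge, and one bridge tile. -/
def baseTile {V : Type} (E : Finset (V × V)) (t : V) :
    V ⊕ {e : V × V // e ∈ E} ⊕ Unit → STile V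
  | .inl v => vertexTile v
  | .inr (.inl e) => edgeTile e.1.1 e.1.2
  | .inr (.inr _) => bridgeTile t

section Aux
set_option linter.unusedSectionVars false
variable {V : Type} [DecidableEq V]

/-- tile identifier type -/
abbrev Tid (E : Finset (V × V)) := V ⊕ {e : V × V // e ∈ E} ⊕ Unit

/-- erasure of proofs -/
def ers {E : Finset (V × V)} : Tid E → V ⊕ (V × V) ⊕ Unit :=
  Sum.map id (Sum.map Subtype.val id)

lemma ers_eq_inl {E : Finset (V × V)} {y : Tid E} {v : V} :
    ers y = Sum.inl v ↔ y = Sum.inl v := by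
  rcases y with v' | e | u <;> simp [ers]

lemma ers_eq_inr_inl {E : Finset (V × V)} {y : Tid E} {p : V × V} :
    ers y = Sum.inr (Sum.inl p) ↔ ∃ h : p ∈ E, y = Sum.inr (Sum.inl ⟨p, h⟩) := by
  rcases y with v' | e | u <;> simp [ers]

lemma ers_eq_inr_inr {E : Finset (V × V)} {y : Tid E} :
    ers y = Sum.inr (Sum.inr ()) ↔ y = Sum.inr (Sum.inr ()) := by
  rcases y with v' | e | u <;> simp [ers]

/-- plain interleave of vertices and edges -/
def pil : List V → List (V ⊕ (V × V) ⊕ Unit)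
  | [] => []
  | [v] => [Sum.inl v]
  | v :: w :: r => Sum.inl v :: Sum.inr (Sum.inl (v, w)) :: pil (w :: r)

lemma pil_mem : ∀ (l : List V) (x), x ∈ pil l ↔
    (∃ v ∈ l, x = Sum.inl v) ∨ (∃ p ∈ l.zip l.tail, x = Sum.inr (Sum.inl p))
  | [], x => by simp [pil]
  | [v], x => by simp [pil]
  | v :: w :: r, x => by
    simp only [pil, List.mem_cons, pil_mem (w :: r) x, List.zip_cons_cons, List.tail_cons]
    aesop

lemma pil_nodup : ∀ (l : List V), l.Nodup → (pil l).Nodup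
  | [], _ => by simp [pil]
  | [v], _ => by simp [pil]
  | v :: w :: r, h => by
    have h' : (w :: r).Nodup := h.of_cons
    have hv : v ∉ (w :: r) := (List.nodup_cons.mp h).1
    refine List.nodup_cons.mpr ⟨?_, List.nodup_cons.mpr ⟨?_, pil_nodup _ h'⟩⟩
    · intro hmem
      rcases List.mem_cons.mp hmem with h1 | h1
      · simp at h1
      · rcases (pil_mem _ _).mp h1 with ⟨v', hv', he⟩ | ⟨p, hp, he⟩
        · exact hv (Sum.inl.inj he ▸ hv')
        · simp at he
    · intro hmem
      rcases (pil_mem _ _).mp hmem with ⟨v', _, he⟩ | ⟨p, hp, he⟩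
      · simp at he
      · have : p = (v, w) := by
          have := Sum.inr.inj he
          exact (Sum.inl.inj this).symm
        subst this
        exact hv (List.of_mem_zip hp).1

/-- the interleaved list of (tile id, rotation) pairs along the path -/
def ilv (E : Finset (V × V)) : (l : List V) → l.Chain' (fun a b => (a, b) ∈ E) → List (Tid E × ℕ)
  | [], _ => []
  | [v], _ => [(Sum.inl v, 0)]
  | v :: w :: r, h =>
    (Sum.inl v, 0) :: (Sum.inr (Sum.inl ⟨(v, w), (List.isChain_cons_cons.mp h).1⟩), 0) ::
      ilv E (w :: r) (show List.Chain' _ (w :: r) from (List.isChain_cons_cons.mp h).2)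

lemma ilv_map_ers (E : Finset (V × V)) :
    ∀ (l : List V) (h), (ilv E l h).map (ers ∘ Prod.fst) = pil l
  | [], _ => rfl
  | [v], _ => rfl
  | v :: w :: r, h => by
    simp only [ilv, List.map_cons, pil, ilv_map_ers E (w :: r)]
    rfl

lemma ilv_head (E : Finset (V × V)) :
    ∀ (l : List V) (h) (v : V) (r : List V), l = v :: r → (ilv E l h).head? = some (Sum.inl v, 0)
  | [], _, v, r, hl => by simp at hl
  | [v'], _, v, r, hl => by cases hl; rfl
  | v' :: w :: r', h, v, r, hl => by
    injection hl with h1 h2; subst h1; rfl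

lemma ilv_ne_nil (E : Finset (V × V)) :
    ∀ (l : List V) (h), l ≠ [] → ilv E l h ≠ []
  | [], _, hne => absurd rfl hne
  | [v], _, _ => by simp [ilv]
  | v :: w :: r, h, _ => by simp [ilv]

lemma ilv_getLast (E : Finset (V × V)) :
    ∀ (l : List V) (h) (hne : l ≠ []),
      (ilv E l h).getLast? = some (Sum.inl (l.getLast hne), 0)
  | [], _, hne => absurd rfl hne
  | [v], _, _ => rfl
  | v :: w :: r, h, _ => by
    have hne' : (w :: r) ≠ [] := by simp
    have IH := ilv_getLast E (w :: r) (List.isChain_cons_cons.mp h).2 hne'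
    have hil : ilv E (v :: w :: r) h = (Sum.inl v, 0) ::
        (Sum.inr (Sum.inl ⟨(v, w), (List.isChain_cons_cons.mp h).1⟩), 0) ::
        ilv E (w :: r) (List.isChain_cons_cons.mp h).2 := rfl
    rw [hil, List.getLast?_cons_cons]
    cases hm : ilv E (w :: r) (List.isChain_cons_cons.mp h).2 with
    | nil => exact absurd hm (ilv_ne_nil E _ _ hne')
    | cons c m' =>
      rw [List.getLast?_cons_cons]
      rw [hm] at IH
      rw [IH, List.getLast_cons hne']

variable (E : Finset (V × V)) (t : V)

/-- relation between placed tiles -/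
def Rt (a b : Tid E × ℕ) : Prop :=
  compatible (rotCW^[a.2] (baseTile E t a.1)) (rotCW^[b.2] (baseTile E t b.1))

lemma ilv_chain : ∀ (l : List V) (h), List.Chain' (Rt E t) (ilv E l h)
  | [], _ => by simp [ilv, List.Chain']
  | [v], _ => by simp [ilv, List.Chain']
  | v :: w :: r, h => by
    have IH := ilv_chain (w :: r) (List.isChain_cons_cons.mp h).2
    refine List.isChain_cons_cons.mpr ⟨⟨rfl, rfl⟩, List.isChain_cons.mpr ⟨?_, IH⟩⟩
    intro y hy
    rw [ilv_head E (w :: r) _ w r rfl] at hy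
    cases Option.some.inj hy
    exact ⟨rfl, rfl⟩

lemma rem_chain : ∀ (m : List (Tid E × ℕ)),
    (∀ x ∈ m, ∃ e : {e : V × V // e ∈ E}, x = (Sum.inr (Sum.inl e), 3)) →
    ∀ b : Tid E × ℕ, (rotCW^[b.2] (baseTile E t b.1)).right = (Col.X, false) →
    List.Chain' (Rt E t) (b :: m)
  | [], _, b, _ => by simp [List.Chain']
  | x :: m', hm, b, hb => by
    obtain ⟨e, rfl⟩ := hm x (by simp)
    refine List.isChain_cons_cons.mpr ⟨⟨?_, ?_⟩, ?_⟩
    · rw [hb]; rfl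
    · rw [hb]; rfl
    · exact rem_chain m' (fun y hy => hm y (by simp [hy])) _ rfl

end Aux

lemma ers_injective {V : Type} [DecidableEq V] {E : Finset (V × V)} :
    Function.Injective (ers (E := E)) := by
  intro a b h
  rcases a with v | e | u <;> rcases b with v' | e' | u' <;>
    simp [ers] at h ⊢ <;> first | exact h | exact Subtype.ext h

/-- If the directed graph `G = (V, E)`, with source `s` and sink `t` (unique),
has a Hamiltonian path from `s` to `t`, then all `n = |V| + |E| + 1` tiles of the
constructed signed edge-matching instance can be placed (with rotations) in a
`1 × n` row with every adjacent pair compatible. -/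
theorem stmt14 {V : Type} [Fintype V] [DecidableEq V] (E : Finset (V × V)) (s t : V)
    (hs : ∀ u : V, (u, s) ∉ E) (ht : ∀ w : V, (t, w) ∉ E)
    (hsu : ∀ v : V, (∀ u : V, (u, v) ∉ E) → v = s)
    (htu : ∀ v : V, (∀ w : V, (v, w) ∉ E) → v = t)
    (hham : ∃ l : List V, l.Nodup ∧ (∀ v : V, v ∈ l) ∧
      l.Chain' (fun a b => (a, b) ∈ E) ∧ l.head? = some s ∧ l.getLast? = some t) :
    ∃ (σ : Fin (Fintype.card V + E.card + 1) ≃ (V ⊕ {e : V × V // e ∈ E} ⊕ Unit))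
      (rot : Fin (Fintype.card V + E.card + 1) → ℕ),
      ∀ i j : Fin (Fintype.card V + E.card + 1), (j : ℕ) = (i : ℕ) + 1 →
        compatible (rotCW^[rot i] (baseTile E t (σ i)))
          (rotCW^[rot j] (baseTile E t (σ j))) := by
  obtain ⟨l, hnd, hall, hch, hhead, hlast⟩ := hham
  have hlne : l ≠ [] := by intro h; subst h; simp at hhead
  have hlt : l.getLast hlne = t := by
    rw [List.getLast?_eq_getLast hlne] at hlast; exact Option.some.inj hlast
  set pe := l.zip l.tail with hpe
  set rem : List (Tid E × ℕ) :=
    ((E.attach.filter (fun e => e.1 ∉ pe)).toList).map (fun e => (Sum.inr (Sum.inl e), 3))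
    with hrem
  set LP : List (Tid E × ℕ) := ilv E l hch ++ (Sum.inr (Sum.inr ()), 0) :: rem with hLP
  have hchain : List.Chain' (Rt E t) LP := by
    rw [hLP, List.Chain', List.isChain_append]
    refine ⟨ilv_chain E t l hch, ?_, ?_⟩
    · refine rem_chain E t rem ?_ _ rfl
      intro x hx
      rw [hrem] at hx
      obtain ⟨e, _, rfl⟩ := List.mem_map.mp hx
      exact ⟨e, rfl⟩
    · intro x hx y hy
      rw [ilv_getLast E l hch hlne] at hx
      cases Option.some.inj hx
      simp only [List.head?_cons] at hy
      cases Option.some.inj hy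
      rw [hlt]
      exact ⟨rfl, rfl⟩
  set F := LP.map Prod.fst with hF
  have memIlv : ∀ x : Tid E, x ∈ (ilv E l hch).map Prod.fst ↔ ers x ∈ pil l := by
    intro x
    constructor
    · intro hx
      have : ers x ∈ ((ilv E l hch).map Prod.fst).map ers := List.mem_map_of_mem hx
      rwa [List.map_map, ilv_map_ers] at this
    · intro hx
      rw [← ilv_map_ers E l hch] at hx
      obtain ⟨p, hp, hpe'⟩ := List.mem_map.mp hx
      have : p.1 = x := ers_injective hpe'
      exact this ▸ List.mem_map_of_mem (f := Prod.fst) hp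
  have nd1 : ((ilv E l hch).map Prod.fst).Nodup := by
    have h1 : (((ilv E l hch).map Prod.fst).map ers).Nodup := by
      rw [List.map_map, ilv_map_ers]
      exact pil_nodup l hnd
    exact h1.of_map _
  have nd2 : (rem.map Prod.fst).Nodup := by
    rw [hrem, List.map_map]
    refine List.Nodup.map ?_ (Finset.nodup_toList _)
    intro a b h
    simpa using h
  have ndF : F.Nodup := by
    rw [hF, hLP, List.map_append, List.map_cons]
    refine List.Nodup.append nd1 (List.nodup_cons.mpr ⟨?_, nd2⟩) ?_
    · intro hmem
      rw [hrem, List.map_map] at hmem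
      obtain ⟨e, _, he⟩ := List.mem_map.mp hmem
      simp at he
    · intro x hx1 hx2
      have hpx : ers x ∈ pil l := (memIlv x).mp hx1
      rcases List.mem_cons.mp hx2 with rfl | hx2
      · rcases (pil_mem l _).mp hpx with ⟨v, _, he⟩ | ⟨p, _, he⟩ <;> simp [ers] at he
      · rw [hrem, List.map_map] at hx2
        obtain ⟨e, hef, rfl⟩ := List.mem_map.mp hx2
        rcases (pil_mem l _).mp hpx with ⟨v, _, he⟩ | ⟨p, hp, he⟩
        · simp [ers] at he
        · have hpeq : e.1 = p := by simpa [ers] using he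
          have hne := (Finset.mem_filter.mp (Finset.mem_toList.mp hef)).2
          exact hne (hpeq ▸ hp)
  have hFall : ∀ x : Tid E, x ∈ F := by
    intro x
    rw [hF, hLP, List.map_append, List.map_cons, List.mem_append, List.mem_cons]
    rcases x with v | e | u
    · exact Or.inl ((memIlv _).mpr ((pil_mem l _).mpr (Or.inl ⟨v, hall v, rfl⟩)))
    · by_cases hin : e.1 ∈ pe
      · exact Or.inl ((memIlv _).mpr ((pil_mem l _).mpr (Or.inr ⟨e.1, hin, rfl⟩)))
      · refine Or.inr (Or.inr ?_)
        rw [hrem, List.map_map]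
        exact List.mem_map.mpr
          ⟨e, Finset.mem_toList.mpr (Finset.mem_filter.mpr ⟨Finset.mem_attach _ _, hin⟩), rfl⟩
    · exact Or.inr (Or.inl (by cases u; rfl))
  have hcard : Fintype.card V + E.card + 1 = F.length := by
    have h1 : Fintype.card (Tid E) = F.length := by
      rw [← Fintype.card_fin F.length]
      exact (Fintype.card_congr (List.Nodup.getEquivOfForallMemList F ndF hFall)).symm
    have h2 : Fintype.card (Tid E) = Fintype.card V + (E.card + 1) := by
      simp [Fintype.card_sum, Fintype.card_coe]
    omega
  have hlen2 : Fintype.card V + E.card + 1 = LP.length := by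
    rw [hcard, hF, List.length_map]
  refine ⟨(finCongr hcard).trans (List.Nodup.getEquivOfForallMemList F ndF hFall),
    fun i => (LP.get (Fin.cast hlen2 i)).2, ?_⟩
  have hσ : ∀ k : Fin (Fintype.card V + E.card + 1),
      ((finCongr hcard).trans (List.Nodup.getEquivOfForallMemList F ndF hFall)) k
        = (LP.get (Fin.cast hlen2 k)).1 := by
    intro k
    show (List.map Prod.fst LP).get (Fin.cast (by rw [← hF]) (finCongr hcard k)) = _
    rw [List.get_eq_getElem, List.getElem_map]
    rfl
  intro i j hij
  rw [hσ i, hσ j]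
  rcases i with ⟨iv, hvi⟩
  rcases j with ⟨jv, hjv⟩
  simp only [Fin.val] at hij
  subst hij
  have hiL : iv < LP.length - 1 := by
    have h3 := hlen2
    omega
  exact List.isChain_iff_getElem.mp hchain iv (by omega)
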